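/- Let V_w = {z ∈ ℂ : |z| > R, |arg z| < θ} with R > 0 and θ ∈ (0, π/2), and let β : V_w → ℂ be holomorphic with β(z)/z → 1 as z → ∞ in V_w. Then for every ζ ∈ ℂ there exists j ∈ ℕ such that ζ + j ∈ β(V_w); that is, ⋃_{j∈ℕ} (β(V_w) - j) = ℂ. -/

import Mathlib

open Complex Filter Real

open Metric Set

set_option maxHeartbeats 800000

/-- If `β` is holomorphic on the sector `V = {|z| > R, |arg z| < θ}` (`θ < π/2`) and
`β(z)/z → 1` as `z → ∞` in `V`, then `⋃_{j∈ℕ} (β(V) - j) = ℂ`: for every `ζ ∈ ℂ`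
there is `j ∈ ℕ` with `ζ + j ∈ β(V)`. -/
theorem stmt_10 (R θ : ℝ) (hR : 0 < R) (hθ0 : 0 < θ) (hθ : θ < π / 2)
    (V : Set ℂ) (hVdef : V = {z : ℂ | R < ‖z‖ ∧ |Complex.arg z| < θ})
    (β : ℂ → ℂ) (hβ : DifferentiableOn ℂ β V)
    (hlim : Tendsto (fun z => β z / z) ((Filter.comap norm atTop) ⊓ 𝓟 V) (nhds 1)) :
    ∀ ζ : ℂ, ∃ j : ℕ, ζ + (j : ℂ) ∈ β '' V := by
  have hre_le : ∀ w : ℂ, |w.re| ≤ ‖w‖ := fun w => by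
    exact Complex.abs_re_le_norm w
  intro ζ
  obtain ⟨cθ, hcθ⟩ : ∃ x, x = Real.cos θ := ⟨_, rfl⟩
  have hc1 : cθ < 1 := by
    rw [hcθ]
    have := Real.cos_lt_cos_of_nonneg_of_le_pi le_rfl
      (by linarith [Real.pi_pos] : θ ≤ π) hθ0
    simpa using this
  have hc0 : 0 < cθ := by rw [hcθ]; exact Real.cos_pos_of_mem_Ioo ⟨by linarith, hθ⟩
  obtain ⟨ρ, hρdef⟩ : ∃ x, x = (1 - cθ) / (2 * (1 + cθ)) := ⟨_, rfl⟩
  have hρ0 : 0 < ρ := by rw [hρdef]; exact div_pos (by linarith) (by linarith)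
  have hρ1 : ρ < 1 := by
    rw [hρdef, div_lt_one (by linarith)]; nlinarith
  have hρkey : ρ * (1 + cθ) = (1 - cθ) / 2 := by
    rw [hρdef]; field_simp
  obtain ⟨ε, hεdef⟩ : ∃ x, x = ρ / 12 := ⟨_, rfl⟩
  have hε0 : 0 < ε := by rw [hεdef]; linarith
  -- extract quantitative bound from hlim
  obtain ⟨M, hM⟩ : ∃ M : ℝ, ∀ z : ℂ, z ∈ V → M ≤ ‖z‖ → ‖β z - z‖ < ε * ‖z‖ := by
    have h := Metric.tendsto_nhds.mp hlim ε hε0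
    rw [eventually_inf_principal, eventually_comap, eventually_atTop] at h
    obtain ⟨M, hM⟩ := h
    refine ⟨M, fun z hzV hzM => ?_⟩
    have hzV' := hzV
    rw [hVdef] at hzV'
    obtain ⟨hz1, _⟩ := hzV'
    have hz0 : z ≠ 0 := norm_pos_iff.mp (lt_trans hR hz1)
    have hd := hM ‖z‖ hzM z rfl hzV
    have heq : β z - z = (β z / z - 1) * z := by field_simp
    rw [heq, norm_mul]
    rw [dist_eq_norm] at hd
    exact mul_lt_mul_of_pos_right hd (norm_pos_iff.mpr hz0)
  obtain ⟨a, hadef⟩ : ∃ x, x = ‖ζ‖ := ⟨_, rfl⟩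
  have ha0 : 0 ≤ a := by rw [hadef]; exact norm_nonneg _
  -- choose j large
  obtain ⟨j, hj⟩ : ∃ j : ℕ,
      max (max ((a + |M| + R + 1) / (1 - ρ)) (2 * a * (1 + cθ) / (1 - cθ) + 1)) a ≤ (j : ℝ) :=
    exists_nat_ge _
  have hj0 : (0 : ℝ) ≤ j := Nat.cast_nonneg j
  have hj1 : (a + |M| + R + 1) / (1 - ρ) ≤ (j : ℝ) :=
    le_trans (le_max_left _ _ |>.trans (le_max_left _ _)) hj
  have hj2 : 2 * a * (1 + cθ) / (1 - cθ) + 1 ≤ (j : ℝ) :=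
    le_trans (le_max_right _ _ |>.trans (le_max_left _ _)) hj
  have hja : a ≤ (j : ℝ) := le_trans (le_max_right _ _) hj
  have hjM : a + |M| + R + 1 ≤ (j : ℝ) * (1 - ρ) := by
    rw [div_le_iff₀ (by linarith)] at hj1; linarith
  have hjarg : a * (1 + cθ) < (j : ℝ) * (1 - cθ) / 2 := by
    have h2 : 2 * a * (1 + cθ) / (1 - cθ) ≤ (j : ℝ) - 1 := by linarith
    rw [div_le_iff₀ (by linarith)] at h2
    nlinarith
  have hjpos : (0 : ℝ) < j := by nlinarith [abs_nonneg M]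
  obtain ⟨c, hcdef⟩ : ∃ x : ℂ, x = ζ + (j : ℂ) := ⟨_, rfl⟩
  obtain ⟨r, hrdef⟩ : ∃ x : ℝ, x = ρ * j := ⟨_, rfl⟩
  have hr0 : 0 < r := by rw [hrdef]; positivity
  have hnormc : ‖c‖ ≤ a + j := by
    rw [hcdef]
    calc ‖ζ + (j : ℂ)‖ ≤ ‖ζ‖ + ‖(j : ℂ)‖ := norm_add_le _ _
    _ = a + j := by rw [hadef, Complex.norm_natCast]
  -- the closed ball is inside V with norms ≥ M
  have hsub : ∀ z ∈ closedBall c r, z ∈ V ∧ M ≤ ‖z‖ := by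
    intro z hz
    rw [mem_closedBall, dist_eq_norm] at hz
    have h1 := abs_le.mp ((hre_le (z - c)).trans hz)
    have h2 := abs_le.mp (show |ζ.re| ≤ a by rw [hadef]; exact hre_le ζ)
    have hre : (j : ℝ) * (1 - ρ) - a ≤ z.re := by
      have hzre : z.re = (z - c).re + ζ.re + j := by
        simp [hcdef, Complex.sub_re, Complex.add_re]; ring
      rw [hzre, hrdef] at *
      linarith [h1.1, h2.1]
    have hlb : (j : ℝ) * (1 - ρ) - a ≤ ‖z‖ :=
      le_trans hre (le_trans (le_abs_self _) (hre_le z))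
    have hub : ‖z‖ ≤ (j : ℝ) * (1 + ρ) + a := by
      calc ‖z‖ = ‖z - c + c‖ := by rw [sub_add_cancel]
      _ ≤ ‖z - c‖ + ‖c‖ := norm_add_le _ _
      _ ≤ r + (a + j) := add_le_add hz hnormc
      _ = (j : ℝ) * (1 + ρ) + a := by rw [hrdef]; ring
    have hRz : R < ‖z‖ := by linarith [abs_nonneg M]
    have hMz : M ≤ ‖z‖ := by linarith [le_abs_self M]
    have hrepos : 0 < z.re := by linarith [abs_nonneg M]
    have hz0 : z ≠ 0 := fun h0 => by simp [h0] at hrepos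
    have hargz : |Complex.arg z| < θ := by
      by_contra hcon
      push_neg at hcon
      have h3 : Real.cos |Complex.arg z| ≤ cθ := by
        rw [hcθ]
        exact Real.cos_le_cos_of_nonneg_of_le_pi (le_of_lt hθ0) (Complex.abs_arg_le_pi z) hcon
      rw [Real.cos_abs, Complex.cos_arg hz0] at h3
      have hzpos : (0 : ℝ) < ‖z‖ := by
        linarith
      rw [div_le_iff₀ hzpos] at h3
      -- z.re ≤ cθ * ‖z‖, but cθ * ‖z‖ < z.re
      have h7 : cθ * ‖z‖ ≤ cθ * ((j : ℝ) * (1 + ρ) + a) :=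
        mul_le_mul_of_nonneg_left hub hc0.le
      have h8 : (j : ℝ) * (ρ * (1 + cθ)) = (j : ℝ) * ((1 - cθ) / 2) := by rw [hρkey]
      nlinarith [h3, h7, h8, hjarg, hre]
    exact ⟨by rw [hVdef]; exact ⟨hRz, hargz⟩, hMz⟩
  -- β is within r/4 of identity on the closed ball
  have hclose : ∀ z ∈ closedBall c r, ‖β z - z‖ < r / 4 := by
    intro z hz
    obtain ⟨hzV, hzM⟩ := hsub z hz
    have h1 := hM z hzV hzM
    have hub : ‖z‖ ≤ 3 * j := by
      rw [mem_closedBall, dist_eq_norm] at hz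
      calc ‖z‖ = ‖z - c + c‖ := by rw [sub_add_cancel]
      _ ≤ ‖z - c‖ + ‖c‖ := norm_add_le _ _
      _ ≤ r + (a + j) := add_le_add hz hnormc
      _ ≤ 3 * j := by rw [hrdef]; nlinarith
    calc ‖β z - z‖ < ε * ‖z‖ := h1
    _ ≤ ε * (3 * j) := by nlinarith
    _ = r / 4 := by rw [hεdef, hrdef]; ring
  have hcball : c ∈ closedBall c r := mem_closedBall_self hr0.le
  have hballV : closedBall c r ⊆ V := fun z hz => (hsub z hz).1
  have hdc : DiffContOnCl ℂ β (ball c r) :=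
    ⟨hβ.mono (ball_subset_closedBall.trans hballV),
     by rw [closure_ball c hr0.ne']
        exact (hβ.mono hballV).continuousOn⟩
  -- β is not locally constant at c
  have hz₀ : ∃ᶠ z in nhds c, β z ≠ β c := by
    by_contra hcon
    rw [not_frequently] at hcon
    simp only [not_not] at hcon
    have han : AnalyticOnNhd ℂ β (ball c r) :=
      (hβ.mono (ball_subset_closedBall.trans hballV)).analyticOnNhd isOpen_ball
    have hconst : Set.EqOn β (fun _ => β c) (ball c r) :=
      han.eqOn_of_preconnected_of_eventuallyEq (analyticOnNhd_const)
        (convex_ball c r).isPreconnected (mem_ball_self hr0) hcon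
    obtain ⟨z, hzdef⟩ : ∃ x : ℂ, x = c + ((r / 2 : ℝ) : ℂ) := ⟨_, rfl⟩
    have hzc : z - c = ((r / 2 : ℝ) : ℂ) := by rw [hzdef]; ring
    have h4 : ‖z - c‖ = r / 2 := by
      rw [hzc, Complex.norm_real, Real.norm_eq_abs, abs_of_pos (by linarith)]
    have hzball : z ∈ ball c r := by
      rw [mem_ball, dist_eq_norm, h4]; linarith
    have h1 := hclose z (ball_subset_closedBall hzball)
    have h2 := hclose c hcball
    have h3 : β z = β c := hconst hzball
    have h5 : z - c = (z - β z) + (β c - c) := by rw [h3]; ring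
    have h6 : ‖z - c‖ ≤ ‖z - β z‖ + ‖β c - c‖ := h5 ▸ norm_add_le _ _
    rw [norm_sub_rev z (β z), h4] at h6
    linarith
  -- the sphere bound
  have hsphere : ∀ z ∈ sphere c r, r / 2 ≤ ‖β z - β c‖ := by
    intro z hz
    have hzc : ‖z - c‖ = r := by rwa [mem_sphere, dist_eq_norm] at hz
    have h1 := hclose z (sphere_subset_closedBall hz)
    have h2 := hclose c hcball
    have h5 : z - c = (z - β z) + (β z - β c) + (β c - c) := by ring
    have h6 : ‖z - c‖ ≤ ‖z - β z‖ + ‖β z - β c‖ + ‖β c - c‖ :=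
      h5 ▸ norm_add₃_le
    rw [norm_sub_rev z (β z), hzc] at h6
    linarith
  have himg := hdc.ball_subset_image_closedBall hr0 hsphere hz₀
  have hcmem : c ∈ ball (β c) (r / 2 / 2) := by
    rw [mem_ball, dist_eq_norm, norm_sub_rev]
    have := hclose c hcball
    linarith
  obtain ⟨w, hw1, hw2⟩ := himg hcmem
  exact ⟨j, w, hballV hw1, hcdef ▸ hw2⟩
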